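/- The logic G3, axiomatised as propositional intuitionistic logic plus Dummett's linearity axiom (x→y)∨(y→x) and the height-2 Peirce axiom ((x→(((y→z)→y)→y))→x)→x, is sound and complete for the two-world semantics: G3 ⊢ A if and only if t ⊨_h A for every assignment h. -/
import Mathlib


/-- Propositional intuitionistic formulas over atoms `α`
(connectives ∧, ∨, →, ¬, ⊥, ⊤). -/
inductive Form (α : Type) where
  | atom : α → Form α
  | top : Form α
  | bot : Form α
  | and : Form α → Form α → Form α
  | or : Form α → Form α → Form α
  | imp : Form α → Form α → Form α
  | neg : Form α → Form α

/-- Forcing in the two-world Kripke model: world `false` is `t`, world `true`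
is `s`, with `t < s` (the Bool order). -/
def force {α : Type} (h : α → Bool × Bool) : Bool → Form α → Prop
  | w, .atom x => (if w then (h x).2 else (h x).1) = true
  | _, .top => True
  | _, .bot => False
  | w, .and A B => force h w A ∧ force h w B
  | w, .or A B => force h w A ∨ force h w B
  | w, .imp A B => ∀ v : Bool, w ≤ v → force h v A → force h v B
  | w, .neg A => ∀ v : Bool, w ≤ v → ¬ force h v A

/-- An assignment is legitimate when no atom gets the forbidden value `(⊤,⊥)`. -/
def Persistent {α : Type} (h : α → Bool × Bool) : Prop :=
  ∀ x, (h x).1 = true → (h x).2 = true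

/-- The Hilbert system G3: propositional intuitionistic logic plus Dummett's
linearity axiom `(x→y)∨(y→x)` and the height-2 Peirce axiom
`((x→(((y→z)→y)→y))→x)→x`, closed under modus ponens. -/
inductive Prov {α : Type} : Form α → Prop
  | mp {A B : Form α} : Prov (.imp A B) → Prov A → Prov B
  | axK {A B : Form α} : Prov (.imp A (.imp B A))
  | axS {A B C : Form α} :
      Prov (.imp (.imp A (.imp B C)) (.imp (.imp A B) (.imp A C)))
  | andIntro {A B : Form α} : Prov (.imp A (.imp B (.and A B)))
  | andElimL {A B : Form α} : Prov (.imp (.and A B) A)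
  | andElimR {A B : Form α} : Prov (.imp (.and A B) B)
  | orIntroL {A B : Form α} : Prov (.imp A (.or A B))
  | orIntroR {A B : Form α} : Prov (.imp B (.or A B))
  | orElim {A B C : Form α} :
      Prov (.imp (.imp A C) (.imp (.imp B C) (.imp (.or A B) C)))
  | exFalso {A : Form α} : Prov (.imp .bot A)
  | trueIntro : Prov (.top : Form α)
  | negElim {A : Form α} : Prov (.imp (.neg A) (.imp A .bot))
  | negIntro {A : Form α} : Prov (.imp (.imp A .bot) (.neg A))
  | dummett {A B : Form α} : Prov (.or (.imp A B) (.imp B A))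
  | peirce2 {A B C : Form α} :
      Prov (.imp (.imp (.imp A (.imp (.imp (.imp B C) B) B)) A) A)

namespace G3Aux

open Form

variable {α : Type}

/-- Three-valued (pairs of Bools) evaluation matching `force`. -/
def ev (h : α → Bool × Bool) : Form α → Bool × Bool
  | .atom x => h x
  | .top => (true, true)
  | .bot => (false, false)
  | .and A B => ((ev h A).1 && (ev h B).1, (ev h A).2 && (ev h B).2)
  | .or A B => ((ev h A).1 || (ev h B).1, (ev h A).2 || (ev h B).2)
  | .imp A B => ((!(ev h A).1 || (ev h B).1) && (!(ev h A).2 || (ev h B).2),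
      !(ev h A).2 || (ev h B).2)
  | .neg A => (!(ev h A).1 && !(ev h A).2, !(ev h A).2)

lemma ev_mono (h : α → Bool × Bool) (hp : Persistent h) :
    ∀ A : Form α, (ev h A).1 = true → (ev h A).2 = true := by
  intro A
  induction A with
  | atom x => exact hp x
  | top => simp [ev]
  | bot => simp [ev]
  | and A B ihA ihB => simp [ev]; tauto
  | or A B ihA ihB => simp [ev]; tauto
  | imp A B ihA ihB => simp [ev]
  | neg A ihA => simp [ev]

lemma force_iff_ev (h : α → Bool × Bool) :
    ∀ A : Form α, (force h false A ↔ (ev h A).1 = true) ∧ (force h true A ↔ (ev h A).2 = true) := by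
  intro A
  induction A with
  | atom x => constructor <;> simp [force, ev]
  | top => constructor <;> simp [force, ev]
  | bot => constructor <;> simp [force, ev]
  | and A B ihA ihB => constructor <;> simp [force, ev, ihA.1, ihA.2, ihB.1, ihB.2]
  | or A B ihA ihB => constructor <;> simp [force, ev, ihA.1, ihA.2, ihB.1, ihB.2]
  | imp A B ihA ihB =>
      constructor
      · simp only [force]
        constructor
        · intro H
          have h1 := H false (by decide)
          have h2 := H true (by decide)
          rw [ihA.1, ihB.1] at h1
          rw [ihA.2, ihB.2] at h2
          simp only [ev]
          cases hA1 : (ev h A).1 <;> cases hA2 : (ev h A).2 <;>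
            cases hB1 : (ev h B).1 <;> cases hB2 : (ev h B).2 <;> simp_all
        · intro H v hv
          cases v
          · rw [ihA.1, ihB.1]
            intro hA
            simp only [ev] at H
            cases hB1 : (ev h B).1 <;> simp_all
          · rw [ihA.2, ihB.2]
            intro hA
            simp only [ev] at H
            cases hB2 : (ev h B).2 <;> simp_all
      · simp only [force]
        constructor
        · intro H
          have h2 := H true (by decide)
          rw [ihA.2, ihB.2] at h2
          simp only [ev]
          cases hA2 : (ev h A).2 <;> cases hB2 : (ev h B).2 <;> simp_all
        · intro H v hv
          cases v
          · exact absurd hv (by decide)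
          · rw [ihA.2, ihB.2]
            intro hA
            simp only [ev] at H
            cases hB2 : (ev h B).2 <;> simp_all
  | neg A ihA =>
      constructor
      · simp only [force]
        constructor
        · intro H
          have h1 := H false (by decide)
          have h2 := H true (by decide)
          rw [ihA.1] at h1
          rw [ihA.2] at h2
          simp only [ev]
          cases hA1 : (ev h A).1 <;> cases hA2 : (ev h A).2 <;> simp_all
        · intro H v hv
          cases v
          · rw [ihA.1]
            intro hA
            simp only [ev] at H
            simp_all
          · rw [ihA.2]
            intro hA
            simp only [ev] at H
            simp_all
      · simp only [force]
        constructor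
        · intro H
          have h2 := H true (by decide)
          rw [ihA.2] at h2
          simp only [ev]
          simp_all
        · intro H v hv
          cases v
          · exact absurd hv (by decide)
          · rw [ihA.2]
            intro hA
            simp only [ev] at H
            simp_all

end G3Aux
namespace G3Aux
variable {α : Type}

lemma sound {A : Form α} (pr : Prov A) :
    ∀ h : α → Bool × Bool, Persistent h → (ev h A).1 = true := by
  induction pr with
  | @mp A B _ _ ihAB ihA =>
      intro h hp
      have h1 := ihAB h hp
      have h2 := ihA h hp
      simp only [ev] at h1
      cases hB : (ev h B).1 <;> simp_all
  | @axK A B =>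
      intro h hp
      have mA := ev_mono h hp A
      have mB := ev_mono h hp B
      simp only [ev]
      cases hA1 : (ev h A).1 <;> cases hA2 : (ev h A).2 <;>
        cases hB1 : (ev h B).1 <;> cases hB2 : (ev h B).2 <;> simp_all
  | @axS A B C =>
      intro h hp
      have mA := ev_mono h hp A
      have mB := ev_mono h hp B
      have mC := ev_mono h hp C
      simp only [ev]
      cases hA1 : (ev h A).1 <;> cases hA2 : (ev h A).2 <;>
        cases hB1 : (ev h B).1 <;> cases hB2 : (ev h B).2 <;>
        cases hC1 : (ev h C).1 <;> cases hC2 : (ev h C).2 <;> simp_all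
  | @andIntro A B =>
      intro h hp
      have mA := ev_mono h hp A
      have mB := ev_mono h hp B
      simp only [ev]
      cases hA1 : (ev h A).1 <;> cases hA2 : (ev h A).2 <;>
        cases hB1 : (ev h B).1 <;> cases hB2 : (ev h B).2 <;> simp_all
  | @andElimL A B =>
      intro h hp
      have mA := ev_mono h hp A
      have mB := ev_mono h hp B
      simp only [ev]
      cases hA1 : (ev h A).1 <;> cases hA2 : (ev h A).2 <;>
        cases hB1 : (ev h B).1 <;> cases hB2 : (ev h B).2 <;> simp_all
  | @andElimR A B =>
      intro h hp
      have mA := ev_mono h hp A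
      have mB := ev_mono h hp B
      simp only [ev]
      cases hA1 : (ev h A).1 <;> cases hA2 : (ev h A).2 <;>
        cases hB1 : (ev h B).1 <;> cases hB2 : (ev h B).2 <;> simp_all
  | @orIntroL A B =>
      intro h hp
      have mA := ev_mono h hp A
      have mB := ev_mono h hp B
      simp only [ev]
      cases hA1 : (ev h A).1 <;> cases hA2 : (ev h A).2 <;>
        cases hB1 : (ev h B).1 <;> cases hB2 : (ev h B).2 <;> simp_all
  | @orIntroR A B =>
      intro h hp
      have mA := ev_mono h hp A
      have mB := ev_mono h hp B
      simp only [ev]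
      cases hA1 : (ev h A).1 <;> cases hA2 : (ev h A).2 <;>
        cases hB1 : (ev h B).1 <;> cases hB2 : (ev h B).2 <;> simp_all
  | @orElim A B C =>
      intro h hp
      have mA := ev_mono h hp A
      have mB := ev_mono h hp B
      have mC := ev_mono h hp C
      simp only [ev]
      cases hA1 : (ev h A).1 <;> cases hA2 : (ev h A).2 <;>
        cases hB1 : (ev h B).1 <;> cases hB2 : (ev h B).2 <;>
        cases hC1 : (ev h C).1 <;> cases hC2 : (ev h C).2 <;> simp_all
  | @exFalso A =>
      intro h hp
      have mA := ev_mono h hp A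
      simp only [ev]
      cases hA1 : (ev h A).1 <;> cases hA2 : (ev h A).2 <;> simp_all
  | trueIntro => intro h hp; simp [ev]
  | @negElim A =>
      intro h hp
      have mA := ev_mono h hp A
      simp only [ev]
      cases hA1 : (ev h A).1 <;> cases hA2 : (ev h A).2 <;> simp_all
  | @negIntro A =>
      intro h hp
      have mA := ev_mono h hp A
      simp only [ev]
      cases hA1 : (ev h A).1 <;> cases hA2 : (ev h A).2 <;> simp_all
  | @dummett A B =>
      intro h hp
      have mA := ev_mono h hp A
      have mB := ev_mono h hp B
      simp only [ev]
      cases hA1 : (ev h A).1 <;> cases hA2 : (ev h A).2 <;>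
        cases hB1 : (ev h B).1 <;> cases hB2 : (ev h B).2 <;> simp_all
  | @peirce2 A B C =>
      intro h hp
      have mA := ev_mono h hp A
      have mB := ev_mono h hp B
      have mC := ev_mono h hp C
      simp only [ev]
      cases hA1 : (ev h A).1 <;> cases hA2 : (ev h A).2 <;>
        cases hB1 : (ev h B).1 <;> cases hB2 : (ev h B).2 <;>
        cases hC1 : (ev h C).1 <;> cases hC2 : (ev h C).2 <;> simp_all

end G3Aux
namespace G3Aux
variable {α : Type}

/-- Provability from a list of hypotheses. -/
inductive PH (Γ : List (Form α)) : Form α → Prop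
  | hyp {A : Form α} : A ∈ Γ → PH Γ A
  | mp {A B : Form α} : PH Γ (.imp A B) → PH Γ A → PH Γ B
  | ax {A : Form α} : Prov A → PH Γ A

lemma Prov.impRefl (A : Form α) : Prov (A.imp A) :=
  Prov.mp (Prov.mp Prov.axS (Prov.axK (A := A) (B := A.imp A))) (Prov.axK (A := A) (B := A))

lemma PH.toProv {A : Form α} (h : PH [] A) : Prov A := by
  induction h with
  | hyp h => simp at h
  | mp _ _ ih1 ih2 => exact Prov.mp ih1 ih2
  | ax h => exact h

lemma PH.ofProv {Γ : List (Form α)} {A : Form α} (h : Prov A) : PH Γ A := PH.ax h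

lemma PH.wk {Γ Γ' : List (Form α)} {A : Form α} (h : PH Γ A) (hs : ∀ B ∈ Γ, B ∈ Γ') :
    PH Γ' A := by
  induction h with
  | hyp h => exact PH.hyp (hs _ h)
  | mp _ _ ih1 ih2 => exact PH.mp ih1 ih2
  | ax h => exact PH.ax h

lemma PH.wk1 {Γ : List (Form α)} {A B : Form α} (h : PH Γ A) : PH (B :: Γ) A :=
  h.wk (by intro C hC; exact List.mem_cons_of_mem _ hC)

lemma PH.ded {Γ : List (Form α)} {A B : Form α} (h : PH (A :: Γ) B) : PH Γ (A.imp B) := by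
  induction h with
  | @hyp C h =>
      rcases List.mem_cons.mp h with h | h
      · subst h; exact PH.ax (Prov.impRefl _)
      · exact PH.mp (PH.ax Prov.axK) (PH.hyp h)
  | mp _ _ ih1 ih2 => exact PH.mp (PH.mp (PH.ax Prov.axS) ih1) ih2
  | ax h => exact PH.mp (PH.ax Prov.axK) (PH.ax h)

lemma PH.hyp0 {Γ : List (Form α)} {A : Form α} : PH (A :: Γ) A := PH.hyp (by simp)
lemma PH.hyp1 {Γ : List (Form α)} {A B : Form α} : PH (B :: A :: Γ) A := PH.hyp (by simp)
lemma PH.hyp2 {Γ : List (Form α)} {A B C : Form α} : PH (C :: B :: A :: Γ) A := PH.hyp (by simp)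

lemma PH.unded {Γ : List (Form α)} {A B : Form α} (h : PH Γ (A.imp B)) : PH (A :: Γ) B :=
  PH.mp h.wk1 PH.hyp0

lemma PH.andI {Γ : List (Form α)} {A B : Form α} (h1 : PH Γ A) (h2 : PH Γ B) :
    PH Γ (A.and B) := PH.mp (PH.mp (PH.ax Prov.andIntro) h1) h2
lemma PH.andL {Γ : List (Form α)} {A B : Form α} (h : PH Γ (A.and B)) : PH Γ A :=
  PH.mp (PH.ax Prov.andElimL) h
lemma PH.andR {Γ : List (Form α)} {A B : Form α} (h : PH Γ (A.and B)) : PH Γ B :=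
  PH.mp (PH.ax Prov.andElimR) h
lemma PH.orL {Γ : List (Form α)} {A B : Form α} (h : PH Γ A) : PH Γ (A.or B) :=
  PH.mp (PH.ax Prov.orIntroL) h
lemma PH.orR {Γ : List (Form α)} {A B : Form α} (h : PH Γ B) : PH Γ (A.or B) :=
  PH.mp (PH.ax Prov.orIntroR) h
lemma PH.orE {Γ : List (Form α)} {A B C : Form α} (h : PH Γ (A.or B))
    (h1 : PH (A :: Γ) C) (h2 : PH (B :: Γ) C) : PH Γ C :=
  PH.mp (PH.mp (PH.mp (PH.ax Prov.orElim) h1.ded) h2.ded) h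
lemma PH.efq {Γ : List (Form α)} {A : Form α} (h : PH Γ .bot) : PH Γ A :=
  PH.mp (PH.ax Prov.exFalso) h
lemma PH.negE {Γ : List (Form α)} {A : Form α} (h1 : PH Γ (.neg A)) (h2 : PH Γ A) :
    PH Γ (.bot : Form α) := PH.mp (PH.mp (PH.ax Prov.negElim) h1) h2
lemma PH.negI {Γ : List (Form α)} {A : Form α} (h : PH (A :: Γ) (.bot : Form α)) :
    PH Γ (.neg A) := PH.mp (PH.ax Prov.negIntro) h.ded

/-- Composition of implications. -/
lemma PH.comp {Γ : List (Form α)} {A B C : Form α}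
    (h1 : PH Γ (A.imp B)) (h2 : PH Γ (B.imp C)) : PH Γ (A.imp C) :=
  PH.ded (PH.mp h2.wk1 (PH.mp h1.wk1 PH.hyp0))

/-- Double negation introduction. -/
lemma PH.dni {Γ : List (Form α)} {A : Form α} (h : PH Γ A) : PH Γ (Form.neg (.neg A)) :=
  PH.negI (PH.negE PH.hyp0 h.wk1)

/-- ¬¬ is functorial along provable implications. -/
lemma PH.nnMp {Γ : List (Form α)} {A B : Form α} (h : PH Γ (A.imp B))
    (hA : PH Γ (Form.neg (.neg A))) : PH Γ (Form.neg (.neg B)) := by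
  apply PH.negI
  apply PH.negE hA.wk1
  apply PH.negI
  exact PH.negE PH.hyp1 (PH.mp (h.wk1.wk1) PH.hyp0)

lemma PH.nnMp2 {Γ : List (Form α)} {A B C : Form α} (h : PH Γ (A.imp (B.imp C)))
    (hA : PH Γ (Form.neg (.neg A))) (hB : PH Γ (Form.neg (.neg B))) :
    PH Γ (Form.neg (.neg C)) := by
  apply PH.negI
  apply PH.negE hA.wk1
  apply PH.negI
  apply PH.negE hB.wk1.wk1
  apply PH.negI
  refine PH.negE PH.hyp2 ?_
  exact PH.mp (PH.mp (h.wk1.wk1.wk1) PH.hyp1) PH.hyp0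

/-- Weak excluded middle, from Dummett's axiom. -/
lemma PH.wem {Γ : List (Form α)} (A : Form α) : PH Γ ((Form.neg A).or (Form.neg (.neg A))) := by
  apply PH.orE (PH.ax (Prov.dummett (A := A) (B := .neg A)))
  · apply PH.orL
    apply PH.negI
    refine PH.negE (PH.mp PH.hyp1 PH.hyp0) PH.hyp0
  · apply PH.orR
    apply PH.negI
    refine PH.negE PH.hyp0 (PH.mp PH.hyp1 PH.hyp0)

/-- The split principle from the height-2 Peirce axiom:
`⊢ A ∨ (A → P)` where `P = ((B→C)→B)→B`. -/
lemma PH.splitP {Γ : List (Form α)} (A B C : Form α) :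
    PH Γ (A.or (A.imp (Form.imp (Form.imp (B.imp C) B) B))) := by
  set P : Form α := Form.imp (Form.imp (B.imp C) B) B with hP
  set X : Form α := A.or (A.imp P) with hX
  have pe : PH Γ (Form.imp (Form.imp (X.imp P) X) X) := PH.ax Prov.peirce2
  apply PH.mp pe
  apply PH.ded
  -- context: (X → P) :: Γ ⊢ X
  apply PH.orR
  apply PH.ded
  -- A :: (X → P) :: Γ ⊢ P
  exact PH.mp PH.hyp1 (PH.orL PH.hyp0)

/-- `¬¬x ⊢ A ∨ (A → x)`. -/
lemma PH.split {Γ : List (Form α)} (A x : Form α) (hx : PH Γ (Form.neg (.neg x))) :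
    PH Γ (A.or (A.imp x)) := by
  have px : PH Γ (Form.imp (Form.imp (Form.imp (x.imp .bot) x) x) x) := by
    apply PH.ded
    apply PH.mp PH.hyp0
    apply PH.ded
    -- (x→⊥) :: ((x→⊥)→x)→x :: Γ ⊢ x
    apply PH.efq
    refine PH.negE (hx.wk1.wk1) (PH.negI ?_)
    exact PH.mp PH.hyp1 PH.hyp0
  apply PH.orE (PH.splitP A x (.bot))
  · exact PH.orL PH.hyp0
  · exact PH.orR (PH.comp PH.hyp0 px.wk1)

end G3Aux
namespace G3Aux
variable {α : Type}

/-- Atom occurrence. -/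
def occurs (x : α) : Form α → Prop
  | .atom y => x = y
  | .top => False
  | .bot => False
  | .and A B => occurs x A ∨ occurs x B
  | .or A B => occurs x A ∨ occurs x B
  | .imp A B => occurs x A ∨ occurs x B
  | .neg A => occurs x A

/-- The syntactic facts recorded about an atom, according to its semantic value. -/
def FactP (Γ : List (Form α)) (p : Form α) (h : α → Bool × Bool) (x : α) : Prop :=
  (h x = (true, true) → PH Γ (.atom x)) ∧
  (h x = (false, false) → PH Γ (Form.neg (.atom x))) ∧
  (h x = (false, true) →
    PH Γ ((Form.atom x).imp p) ∧ PH Γ (p.imp (.atom x)) ∧ PH Γ (Form.neg (.neg (.atom x))))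

/-- Main lemma: from atom facts, derive the formula / its relation to `p` / its negation,
according to its semantic value. -/
lemma main (h : α → Bool × Bool) (hp : Persistent h) (p : Form α) (Γ : List (Form α)) :
    ∀ A : Form α, (∀ x, occurs x A → FactP Γ p h x) →
      ((ev h A).1 = true → PH Γ A) ∧
      ((ev h A).1 = false → (ev h A).2 = true →
        PH Γ (A.imp p) ∧ PH Γ (p.imp A) ∧ PH Γ (Form.neg (.neg A))) ∧
      ((ev h A).2 = false → PH Γ (.neg A)) := by
  intro A
  induction A with
  | atom x =>
      intro hf
      obtain ⟨f1, f2, f3⟩ := hf x rfl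
      refine ⟨?_, ?_, ?_⟩ <;> simp only [ev]
      · intro h1
        exact f1 (Prod.ext h1 (hp x h1))
      · intro h1 h2
        exact f3 (Prod.ext h1 h2)
      · intro h2
        have h1 : (h x).1 = false := by
          cases hx : (h x).1
          · rfl
          · exact absurd (hp x hx) (by simp [h2])
        exact f2 (Prod.ext h1 h2)
  | top =>
      intro _
      refine ⟨fun _ => PH.ax Prov.trueIntro, ?_, ?_⟩ <;> simp [ev]
  | bot =>
      intro _
      refine ⟨?_, ?_, fun _ => PH.negI PH.hyp0⟩ <;> simp [ev]
  | and A B ihA ihB =>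
      intro hf
      have ihA := ihA (fun x hx => hf x (Or.inl hx))
      have ihB := ihB (fun x hx => hf x (Or.inr hx))
      have mA := ev_mono h hp A
      have mB := ev_mono h hp B
      refine ⟨?_, ?_, ?_⟩ <;> simp only [ev]
      · intro h1
        rw [Bool.and_eq_true] at h1
        exact PH.andI (ihA.1 h1.1) (ihB.1 h1.2)
      · intro h1 h2
        rw [Bool.and_eq_true] at h2
        rw [Bool.and_eq_false_iff] at h1
        cases hA1 : (ev h A).1
        · obtain ⟨iA1, iA2, iA3⟩ := ihA.2.1 hA1 h2.1
          cases hB1 : (ev h B).1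
          · obtain ⟨iB1, iB2, iB3⟩ := ihB.2.1 hB1 h2.2
            exact ⟨PH.comp (PH.ax Prov.andElimL) iA1,
              PH.ded (PH.andI (PH.mp iA2.wk1 PH.hyp0) (PH.mp iB2.wk1 PH.hyp0)),
              PH.nnMp2 (PH.ax Prov.andIntro) iA3 iB3⟩
          · have hB := ihB.1 hB1
            exact ⟨PH.comp (PH.ax Prov.andElimL) iA1,
              PH.ded (PH.andI (PH.mp iA2.wk1 PH.hyp0) hB.wk1),
              PH.nnMp2 (PH.ax Prov.andIntro) iA3 (PH.dni hB)⟩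
        · have hA := ihA.1 hA1
          have hB1 : (ev h B).1 = false := by
            rcases h1 with h1 | h1
            · rw [hA1] at h1; exact absurd h1 (by simp)
            · exact h1
          obtain ⟨iB1, iB2, iB3⟩ := ihB.2.1 hB1 h2.2
          exact ⟨PH.comp (PH.ax Prov.andElimR) iB1,
            PH.ded (PH.andI hA.wk1 (PH.mp iB2.wk1 PH.hyp0)),
            PH.nnMp2 (PH.ax Prov.andIntro) (PH.dni hA) iB3⟩
      · intro h2
        rw [Bool.and_eq_false_iff] at h2
        rcases h2 with h2 | h2
        · exact PH.negI (PH.negE (ihA.2.2 h2).wk1 (PH.andL PH.hyp0))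
        · exact PH.negI (PH.negE (ihB.2.2 h2).wk1 (PH.andR PH.hyp0))
  | or A B ihA ihB =>
      intro hf
      have ihA := ihA (fun x hx => hf x (Or.inl hx))
      have ihB := ihB (fun x hx => hf x (Or.inr hx))
      have mA := ev_mono h hp A
      have mB := ev_mono h hp B
      refine ⟨?_, ?_, ?_⟩ <;> simp only [ev]
      · intro h1
        rw [Bool.or_eq_true] at h1
        rcases h1 with h1 | h1
        · exact PH.orL (ihA.1 h1)
        · exact PH.orR (ihB.1 h1)
      · intro h1 h2
        rw [Bool.or_eq_false_iff] at h1
        rw [Bool.or_eq_true] at h2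
        cases hA2 : (ev h A).2
        · have hB2 : (ev h B).2 = true := by
            rcases h2 with h2 | h2
            · rw [hA2] at h2; exact absurd h2 (by simp)
            · exact h2
          obtain ⟨iB1, iB2, iB3⟩ := ihB.2.1 h1.2 hB2
          have nA := ihA.2.2 hA2
          refine ⟨?_, PH.comp iB2 (PH.ax Prov.orIntroR), PH.nnMp (PH.ax Prov.orIntroR) iB3⟩
          apply PH.ded
          refine PH.orE PH.hyp0 ?_ (PH.mp iB1.wk1.wk1 PH.hyp0)
          exact PH.efq (PH.negE nA.wk1.wk1 PH.hyp0)
        · obtain ⟨iA1, iA2, iA3⟩ := ihA.2.1 h1.1 hA2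
          refine ⟨?_, PH.comp iA2 (PH.ax Prov.orIntroL), PH.nnMp (PH.ax Prov.orIntroL) iA3⟩
          apply PH.ded
          refine PH.orE PH.hyp0 (PH.mp iA1.wk1.wk1 PH.hyp0) ?_
          cases hB2 : (ev h B).2
          · exact PH.efq (PH.negE (ihB.2.2 hB2).wk1.wk1 PH.hyp0)
          · exact PH.mp (ihB.2.1 h1.2 hB2).1.wk1.wk1 PH.hyp0
      · intro h2
        rw [Bool.or_eq_false_iff] at h2
        have nA := ihA.2.2 h2.1
        have nB := ihB.2.2 h2.2
        apply PH.negI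
        exact PH.orE PH.hyp0 (PH.negE nA.wk1.wk1 PH.hyp0) (PH.negE nB.wk1.wk1 PH.hyp0)
  | imp A B ihA ihB =>
      intro hf
      have ihA := ihA (fun x hx => hf x (Or.inl hx))
      have ihB := ihB (fun x hx => hf x (Or.inr hx))
      have mA := ev_mono h hp A
      have mB := ev_mono h hp B
      refine ⟨?_, ?_, ?_⟩ <;> simp only [ev]
      · intro h1
        rw [Bool.and_eq_true] at h1
        obtain ⟨c1, c2⟩ := h1
        cases hB1 : (ev h B).1
        · cases hA2 : (ev h A).2
          · -- A is F
            have nA := ihA.2.2 hA2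
            exact PH.ded (PH.efq (PH.negE nA.wk1 PH.hyp0))
          · cases hA1 : (ev h A).1
            · -- A is M; need B not F: from c2, if B2 false then A2 false contra
              cases hB2 : (ev h B).2
              · rw [hA2, hB2] at c2; exact absurd c2 (by simp)
              · obtain ⟨iA1, _, _⟩ := ihA.2.1 hA1 hA2
                obtain ⟨_, iB2, _⟩ := ihB.2.1 hB1 hB2
                exact PH.comp iA1 iB2
            · -- A is T: then c1 forces B1 true, contra
              rw [hA1, hB1] at c1; exact absurd c1 (by simp)
        · exact PH.ded (ihB.1 hB1).wk1
      · intro h1 h2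
        -- .1 false, .2 true: A is T, B is M
        rw [h2, Bool.and_true] at h1
        have hA1 : (ev h A).1 = true := by
          cases hA1 : (ev h A).1
          · rw [hA1] at h1; exact absurd h1 (by simp)
          · rfl
        have hB1 : (ev h B).1 = false := by
          cases hB1 : (ev h B).1
          · rfl
          · rw [hA1, hB1] at h1; exact absurd h1 (by simp)
        have hB2 : (ev h B).2 = true := by
          cases hB2 : (ev h B).2
          · rw [hB2] at h2
            rw [mA hA1] at h2
            exact absurd h2 (by simp)
          · rfl
        have hA := ihA.1 hA1
        obtain ⟨iB1, iB2, iB3⟩ := ihB.2.1 hB1 hB2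
        refine ⟨?_, ?_, PH.nnMp (PH.ax Prov.axK) iB3⟩
        · exact PH.ded (PH.mp iB1.wk1 (PH.mp PH.hyp0 hA.wk1))
        · exact PH.ded (PH.ded (PH.mp iB2.wk1.wk1 PH.hyp1))
      · intro h2
        -- .2 false: A2 true, B2 false
        have hA2 : (ev h A).2 = true := by
          cases hA2 : (ev h A).2
          · rw [hA2] at h2; exact absurd h2 (by simp)
          · rfl
        have hB2 : (ev h B).2 = false := by
          rw [hA2] at h2; simpa using h2
        have nB := ihB.2.2 hB2
        cases hA1 : (ev h A).1
        · obtain ⟨_, _, iA3⟩ := ihA.2.1 hA1 hA2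
          apply PH.negI
          apply PH.negE iA3.wk1
          apply PH.negI
          exact PH.negE nB.wk1.wk1 (PH.mp PH.hyp1 PH.hyp0)
        · have hA := ihA.1 hA1
          exact PH.negI (PH.negE nB.wk1 (PH.mp PH.hyp0 hA.wk1))
  | neg A ihA =>
      intro hf
      have ihA := ihA hf
      have mA := ev_mono h hp A
      refine ⟨?_, ?_, ?_⟩ <;> simp only [ev]
      · intro h1
        rw [Bool.and_eq_true] at h1
        have hA2 : (ev h A).2 = false := by simpa using h1.2
        exact ihA.2.2 hA2
      · intro h1 h2
        have hA2 : (ev h A).2 = false := by simpa using h2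
        have hA1 : (ev h A).1 = false := by
          cases hA1 : (ev h A).1
          · rfl
          · rw [mA hA1] at hA2; exact absurd hA2 (by simp)
        rw [hA1, hA2] at h1
        exact absurd h1 (by simp)
      · intro h2
        have hA2 : (ev h A).2 = true := by simpa using h2
        cases hA1 : (ev h A).1
        · exact (ihA.2.1 hA1 hA2).2.2
        · exact PH.dni (ihA.1 hA1)

end G3Aux
namespace G3Aux
variable {α : Type}

lemma FactP.wk {Γ Γ' : List (Form α)} {p : Form α} {h : α → Bool × Bool} {y : α}
    (f : FactP Γ p h y) (hs : ∀ C ∈ Γ, C ∈ Γ') : FactP Γ' p h y :=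
  ⟨fun e => (f.1 e).wk hs, fun e => (f.2.1 e).wk hs,
   fun e => ⟨((f.2.2 e).1).wk hs, ((f.2.2 e).2.1).wk hs, ((f.2.2 e).2.2).wk hs⟩⟩

/-- The four-way case split on an atom `x`, relative to a current pivot `p`. -/
lemma split4 {Γ : List (Form α)} {A p : Form α} {x : α}
    (hnp : PH Γ (Form.neg (.neg p)))
    (g1 : PH (Form.neg (.atom x) :: Γ) A)
    (g2 : PH (Form.neg (.neg (.atom x)) :: ((Form.atom x).imp p) :: (p.imp (.atom x)) :: Γ) A)
    (g3 : PH (Form.neg (.neg (.atom x)) :: ((Form.atom x).imp p) :: p :: Γ) A)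
    (g4 : PH (Form.atom x :: Γ) A) : PH Γ A := by
  apply PH.orE (PH.wem (Γ := Γ) (.atom x)) g1
  -- context: ¬¬x :: Γ
  have s1 : PH (Form.neg (.neg (.atom x)) :: Γ) ((Form.atom x).or ((Form.atom x).imp p)) :=
    PH.split _ _ hnp.wk1
  apply PH.orE s1
  · exact g4.wk (by intro B hB; simp at hB ⊢; tauto)
  · -- context: (x→p) :: ¬¬x :: Γ
    have s2 : PH (((Form.atom x).imp p) :: Form.neg (.neg (.atom x)) :: Γ)
        (p.or (p.imp (.atom x))) := PH.split _ _ PH.hyp1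
    apply PH.orE s2
    · exact g3.wk (by intro B hB; simp at hB ⊢; tauto)
    · exact g2.wk (by intro B hB; simp at hB ⊢; tauto)

lemma cover (A : Form α) (Hv : ∀ h : α → Bool × Bool, Persistent h → (ev h A).1 = true) :
    ∀ (L : List α) (Γ : List (Form α)) (p : Form α) (h : α → Bool × Bool),
      Persistent h → PH Γ (Form.neg (.neg p)) →
      (∀ x, x ∉ L → occurs x A → FactP Γ p h x) → PH Γ A := by
  intro L
  induction L with
  | nil =>
      intro Γ p h hp hnp hf
      exact (main h hp p Γ A (fun x hx => hf x (by simp) hx)).1 (Hv h hp)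
  | cons x L ih =>
      intro Γ p h hp hnp hf
      classical
      have hfL : ∀ y, y ≠ x → y ∉ L → occurs y A → FactP Γ p h y := by
        intro y h1 h2 h3
        exact hf y (by simp [h1, h2]) h3
      apply split4 (x := x) (p := p) hnp
      · -- x becomes false-false
        apply ih _ p (fun y => if y = x then (false, false) else h y)
        · intro y
          by_cases hyx : y = x <;> simp [hyx]
          exact hp y
        · exact hnp.wk1
        · intro y hyL hyA
          by_cases hyx : y = x
          · subst hyx
            refine ⟨?_, fun _ => PH.hyp0, ?_⟩ <;> simp
          · have old : FactP (Form.neg (.atom x) :: Γ) p h y :=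
              (hfL y hyx hyL hyA).wk (by intro C hC; simp [hC])
            simpa only [FactP, if_neg hyx] using old
      · -- x becomes middle, tied to p
        apply ih _ p (fun y => if y = x then (false, true) else h y)
        · intro y
          by_cases hyx : y = x <;> simp [hyx]
          exact hp y
        · exact hnp.wk1.wk1.wk1
        · intro y hyL hyA
          by_cases hyx : y = x
          · subst hyx
            refine ⟨?_, ?_, fun _ => ⟨PH.hyp1, PH.hyp2, PH.hyp0⟩⟩ <;> simp
          · have old : FactP (Form.neg (.neg (.atom x)) :: ((Form.atom x).imp p) ::
                (p.imp (.atom x)) :: Γ) p h y :=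
              (hfL y hyx hyL hyA).wk (by intro C hC; simp [hC])
            simpa only [FactP, if_neg hyx] using old
      · -- pivot change: x becomes the new pivot, old middles become true
        apply ih _ (.atom x)
            (fun y => if y = x then (false, true) else if h y = (false, true) then (true, true) else h y)
        · intro y
          by_cases hyx : y = x
          · simp [hyx]
          · by_cases hym : h y = (false, true) <;> simp [hyx, hym]
            exact hp y
        · exact PH.hyp0
        · intro y hyL hyA
          by_cases hyx : y = x
          · subst hyx
            refine ⟨?_, ?_, fun _ => ⟨PH.ax (Prov.impRefl _), PH.ax (Prov.impRefl _), PH.hyp0⟩⟩ <;>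
              simp
          · by_cases hym : h y = (false, true)
            · have old := hfL y hyx hyL hyA
              have hpy : PH (Form.neg (.neg (.atom x)) :: ((Form.atom x).imp p) :: p :: Γ)
                  (.atom y) :=
                PH.mp (((old.2.2 hym).2.1).wk (by intro C hC; simp [hC])) PH.hyp2
              refine ⟨fun _ => hpy, ?_, ?_⟩ <;> simp [hyx, hym]
            · have old := (hfL y hyx hyL hyA)
              have old' : FactP (Form.neg (.neg (.atom x)) :: ((Form.atom x).imp p) :: p :: Γ)
                  p h y := old.wk (by intro C hC; simp [hC])
              -- transport facts to the new pivot: only T and F facts survive unchanged,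
              -- and the M case is excluded by hym
              refine ⟨?_, ?_, ?_⟩ <;> simp only [if_neg hyx, if_neg hym]
              · intro e
                exact old'.1 e
              · intro e
                exact old'.2.1 e
              · intro e
                exact absurd e hym
      · -- x becomes true
        apply ih _ p (fun y => if y = x then (true, true) else h y)
        · intro y
          by_cases hyx : y = x <;> simp [hyx]
          exact hp y
        · exact hnp.wk1
        · intro y hyL hyA
          by_cases hyx : y = x
          · subst hyx
            refine ⟨fun _ => PH.hyp0, ?_, ?_⟩ <;> simp
          · have old : FactP (Form.atom x :: Γ) p h y :=
              (hfL y hyx hyL hyA).wk (by intro C hC; simp [hC])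
            simpa only [FactP, if_neg hyx] using old

def atomsList : Form α → List α
  | .atom x => [x]
  | .top => []
  | .bot => []
  | .and A B => atomsList A ++ atomsList B
  | .or A B => atomsList A ++ atomsList B
  | .imp A B => atomsList A ++ atomsList B
  | .neg A => atomsList A

lemma occurs_mem {x : α} : ∀ {A : Form α}, occurs x A → x ∈ atomsList A := by
  intro A
  induction A with
  | atom y => intro h; simp [occurs] at h; simp [atomsList, h]
  | top => intro h; simp [occurs] at h
  | bot => intro h; simp [occurs] at h
  | and A B ihA ihB => intro h; rcases h with h | h <;> simp [atomsList] <;> [exact Or.inl (ihA h); exact Or.inr (ihB h)]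
  | or A B ihA ihB => intro h; rcases h with h | h <;> simp [atomsList] <;> [exact Or.inl (ihA h); exact Or.inr (ihB h)]
  | imp A B ihA ihB => intro h; rcases h with h | h <;> simp [atomsList] <;> [exact Or.inl (ihA h); exact Or.inr (ihB h)]
  | neg A ihA => intro h; exact ihA h

lemma complete (A : Form α) (Hv : ∀ h : α → Bool × Bool, Persistent h → force h false A) :
    Prov A := by
  have Hv' : ∀ h : α → Bool × Bool, Persistent h → (ev h A).1 = true := fun h hp =>
    (force_iff_ev h A).1.mp (Hv h hp)
  have := cover A Hv' (atomsList A) [] (.top) (fun _ => (false, false))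
    (by intro y; simp) (PH.dni (PH.ax Prov.trueIntro))
    (by intro y hy hocc; exact absurd (occurs_mem hocc) hy)
  exact this.toProv

end G3Aux

/-- Soundness and completeness of G3 for the two-world semantics:
`G3 ⊢ A` iff `A` holds at the actual world `t` under every assignment. -/
theorem stmt13 {α : Type} (A : Form α) :
    Prov A ↔ ∀ h : α → Bool × Bool, Persistent h → force h false A := by
  constructor
  · intro pr h hp
    exact (G3Aux.force_iff_ev h A).1.mpr (G3Aux.sound pr h hp)
  · exact G3Aux.complete A
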